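/- Let p be an odd prime. Then in F_p[X] one has the identity Σ_{r=0}^{p-1} P̄_r(X) = ε · (X-1)^{(p-1)/2}, where ε ∈ {1,-1} is the Legendre symbol (-2/p), i.e. ε = 1 if -2 is a square in F_p^× and ε = -1 otherwise. -/

import Mathlib

open Polynomial
open scoped Classical


lemma zmod_two_ne_zero (p : ℕ) [Fact p.Prime] (hodd : Odd p) : (2 : ZMod p) ≠ 0 := by
  intro h
  have h2 : ((2:ℕ) : ZMod p) = 0 := by exact_mod_cast h
  have hd : p ∣ 2 := (CharP.cast_eq_zero_iff (ZMod p) p 2).mp h2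
  have := (Nat.prime_dvd_prime_iff_eq (Fact.out : p.Prime) Nat.prime_two).mp hd
  obtain ⟨t, ht⟩ := hodd; omega

lemma zmod_centralBinom (p : ℕ) [Fact p.Prime] (hodd : Odd p) :
    ∀ n : ℕ, n < p → (((2*n).choose n : ℕ) : ZMod p)
      = (-4)^n * ((((p-1)/2).choose n : ℕ) : ZMod p) := by
  obtain ⟨t, ht⟩ := hodd
  intro n
  induction n with
  | zero => simp
  | succ n ih =>
    intro hn
    have ih' := ih (by omega)
    set M := (p-1)/2 with hM
    have h1 : ((n+1 : ℕ) : ZMod p) ≠ 0 := by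
      rw [Ne, CharP.cast_eq_zero_iff (ZMod p) p]
      intro hd
      have := Nat.le_of_dvd (by omega) hd
      omega
    apply mul_left_cancel₀ h1
    have hcb : ((n + 1) * (2*(n+1)).choose (n+1) : ℕ) = (2 * (2 * n + 1) * ((2*n).choose n) : ℕ) :=
      Nat.succ_mul_centralBinom_succ n
    have hcb' : ((n:ZMod p) + 1) * (((2*(n+1)).choose (n+1) : ℕ) : ZMod p)
        = 2 * (2 * (n:ZMod p) + 1) * (((2*n).choose n : ℕ) : ZMod p) := by
      exact_mod_cast congrArg (Nat.cast : ℕ → ZMod p) hcb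
    push_cast
    rw [hcb', ih']
    rcases le_or_gt n M with hnm | hnm
    · have h2M : 2 * (M : ZMod p) = -1 := by
        have h0 : ((2*M+1 : ℕ) : ZMod p) = 0 := by
          rw [show 2*M+1 = p by omega]; exact ZMod.natCast_self p
        push_cast at h0; linear_combination h0
      have hch := congrArg (Nat.cast : ℕ → ZMod p) (Nat.choose_succ_right_eq M n)
      push_cast [Nat.cast_sub hnm] at hch
      linear_combination (-(-4:ZMod p)^(n+1)) * hch
        + (2*(-4:ZMod p)^n * ((M.choose n : ℕ) : ZMod p)) * h2M
    · rw [Nat.choose_eq_zero_of_lt hnm, Nat.choose_eq_zero_of_lt (by omega : M < n+1)]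
      push_cast; ring

lemma choose_identity (n k : ℕ) (hk : k ≤ n) :
    (n+k).choose k * (2*n).choose (n+k) = (2*n).choose n * n.choose k := by
  have h1 := Nat.choose_mul (n := 2*n) (k := n+k) (s := k) (by omega)
  have h2 := Nat.choose_mul (n := 2*n) (k := n) (s := k) hk
  have h3 : (2*n - k).choose (n - k) = (2*n - k).choose n := by
    have := Nat.choose_symm (n := 2*n - k) (k := n) (by omega)
    rw [show 2*n - k - n = n - k by omega] at this
    exact this
  rw [show n + k - k = n by omega] at h1
  rw [h3] at h2
  rw [mul_comm, h1, h2]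

lemma key_term (p : ℕ) [Fact p.Prime] (hodd : Odd p) (n k : ℕ) (hk : k ≤ n) (h : n + k < p) :
    (((2:ZMod p))^(n+k))⁻¹ * ((-1)^k * (((n+k).choose k : ℕ) : ZMod p)
        * (((2*n).choose (n+k) : ℕ) : ZMod p))
      = ((((p-1)/2).choose n : ℕ) : ZMod p) * ((n.choose k : ℕ) : ZMod p) * (-2)^(n-k) := by
  have h2 : ((2:ZMod p))^(n+k) ≠ 0 := pow_ne_zero _ (zmod_two_ne_zero p hodd)
  rw [inv_mul_eq_iff_eq_mul₀ h2]
  have hB := congrArg (Nat.cast : ℕ → ZMod p) (choose_identity n k hk)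
  push_cast at hB
  have hA := zmod_centralBinom p hodd n (by omega)
  obtain ⟨d, rfl⟩ : ∃ d, n = k + d := ⟨n - k, by omega⟩
  rw [show k + d - k = d by omega]
  calc (-1:ZMod p)^k * ((k+d+k).choose k : ℕ) * (((2*(k+d)).choose (k+d+k) : ℕ) : ZMod p)
      = (-1)^k * ((((2*(k+d)).choose (k+d) : ℕ) : ZMod p) * (((k+d).choose k : ℕ) : ZMod p)) := by
        rw [← hB]; ring
    _ = (-1)^k * ((-4)^(k+d) * ((((p-1)/2).choose (k+d) : ℕ) : ZMod p) * (((k+d).choose k : ℕ) : ZMod p)) := by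
        rw [hA]
    _ = (2:ZMod p)^(k+d+k) * (((((p-1)/2).choose (k+d) : ℕ) : ZMod p) * (((k+d).choose k : ℕ) : ZMod p) * (-2)^d) := by
        rw [show ((-4:ZMod p)) = (-1) * 2^2 by ring, show ((-2:ZMod p)) = (-1) * 2 by ring,
          mul_pow, mul_pow, ← pow_mul]
        rw [show (-1:ZMod p)^(k+d) = (-1)^k * (-1)^d by rw [pow_add]]
        rw [show 2*(k+d) = (k+d+k) + d by omega, pow_add]
        ring_nf
        rw [show k*2 = 2*k by omega, pow_mul, neg_one_sq, one_pow]
        ring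

/-- The mod-`p` reduction of the `r`-th Legendre polynomial
`P_r(X) = 2^{-r} · Σ_{k=0}^{⌊r/2⌋} (-1)^k · C(r,k) · C(2r-2k, r) · X^{r-2k}`,
defined directly over any field `E` (intended: of odd characteristic). -/
noncomputable def legendreMod (E : Type*) [Field E] (r : ℕ) : E[X] :=
  C (((2 : E) ^ r)⁻¹) * ∑ k ∈ Finset.range (r / 2 + 1),
    C ((-1 : E) ^ k * (r.choose k : E) * (((2 * r - 2 * k).choose r : ℕ) : E)) * X ^ (r - 2 * k)

noncomputable def auxG (p m n k : ℕ) : (ZMod p)[X] :=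
  C (((m.choose n : ℕ) : ZMod p) * ((n.choose k : ℕ) : ZMod p) * (-2)^(n-k)) * X^(n-k)

/-- For an odd prime `p`, in `F_p[X]` one has
`Σ_{r=0}^{p-1} P̄_r(X) = ε · (X-1)^{(p-1)/2}` where `ε = (-2/p)` is `1` if `-2` is a square
in `F_p^×` and `-1` otherwise. -/
theorem sum_legendreMod_eq (p : ℕ) [Fact p.Prime] (hodd : Odd p) :
    ∑ r ∈ Finset.range p, legendreMod (ZMod p) r =
      C (if IsSquare (-2 : ZMod p) then (1 : ZMod p) else -1) *
        (X - 1) ^ ((p - 1) / 2) := by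
  obtain ⟨t, ht⟩ := id hodd
  set m := (p-1)/2 with hm
  have hC2 : C (-2 : ZMod p) = -2 := by simp [map_neg, map_ofNat]
  have step1 : ∀ r ∈ Finset.range p, legendreMod (ZMod p) r
      = ∑ k ∈ Finset.range (r/2+1), auxG p m (r-k) k := by
    intro r hr
    rw [Finset.mem_range] at hr
    rw [legendreMod, Finset.mul_sum]
    refine Finset.sum_congr rfl fun k hk => ?_
    rw [Finset.mem_range] at hk
    obtain ⟨n, rfl⟩ : ∃ n, r = n + k := ⟨r - k, by omega⟩
    rw [show n + k - k = n by omega, show 2*(n+k) - 2*k = 2*n by omega,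
      show n + k - 2*k = n - k by omega]
    rw [auxG, ← mul_assoc, ← C_mul, key_term p hodd n k (by omega) (by omega)]
  rw [Finset.sum_congr rfl step1]
  have hsig1 : ∑ r ∈ Finset.range p, ∑ k ∈ Finset.range (r/2+1), auxG p m (r-k) k
      = ∑ x ∈ (Finset.range p).sigma (fun r => Finset.range (r/2+1)), auxG p m (x.1-x.2) x.2 :=
    Finset.sum_sigma' _ _ _
  rw [hsig1]
  have hsig2 : ∑ x ∈ (Finset.range p).sigma (fun r => Finset.range (r/2+1)), auxG p m (x.1-x.2) x.2
      = ∑ y ∈ (Finset.range p).sigma (fun n => Finset.range (min (n+1) (p-n))), auxG p m y.1 y.2 := by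
    refine Finset.sum_nbij' (i := fun x => ⟨x.1 - x.2, x.2⟩) (j := fun y => ⟨y.1 + y.2, y.2⟩)
      ?_ ?_ ?_ ?_ ?_
    · intro a ha
      simp only [Finset.mem_sigma, Finset.mem_range, lt_min_iff] at ha ⊢
      omega
    · intro a ha
      simp only [Finset.mem_sigma, Finset.mem_range, lt_min_iff] at ha ⊢
      omega
    · rintro ⟨r, k⟩ ha
      simp only [Finset.mem_sigma, Finset.mem_range] at ha
      have hkr : r - k + k = r := by omega
      exact congrArg (fun x => (⟨x, k⟩ : (_ : ℕ) × ℕ)) hkr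
    · rintro ⟨r, k⟩ ha
      exact congrArg (fun x => (⟨x, k⟩ : (_ : ℕ) × ℕ)) (Nat.add_sub_cancel r k)
    · intro a ha; rfl
  rw [hsig2]
  have hsub : ∑ y ∈ (Finset.range p).sigma (fun n => Finset.range (min (n+1) (p-n))), auxG p m y.1 y.2
      = ∑ y ∈ (Finset.range (m+1)).sigma (fun n => Finset.range (n+1)), auxG p m y.1 y.2 := by
    symm
    refine Finset.sum_subset ?_ ?_
    · intro a ha
      simp only [Finset.mem_sigma, Finset.mem_range, lt_min_iff] at ha ⊢
      omega
    · intro a ha ha'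
      simp only [Finset.mem_sigma, Finset.mem_range, lt_min_iff] at ha ha'
      have : m < a.1 := by omega
      simp [auxG, Nat.choose_eq_zero_of_lt this]
  rw [hsub]
  have hsig3 : ∑ y ∈ (Finset.range (m+1)).sigma (fun n => Finset.range (n+1)), auxG p m y.1 y.2
      = ∑ n ∈ Finset.range (m+1), ∑ k ∈ Finset.range (n+1), auxG p m n k :=
    (Finset.sum_sigma' _ _ _).symm
  rw [hsig3]
  have inner : ∀ n, ∑ k ∈ Finset.range (n+1), auxG p m n k
      = C ((m.choose n : ℕ) : ZMod p) * (1 + C (-2:ZMod p) * X)^n := by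
    intro n
    rw [add_pow, Finset.mul_sum]
    refine Finset.sum_congr rfl fun k hk => ?_
    rw [auxG, one_pow, one_mul, mul_pow, ← C_pow, ← Polynomial.C_eq_natCast]
    simp only [C_mul]
    ring
  rw [Finset.sum_congr rfl (fun n _ => inner n)]
  have outer : ∑ n ∈ Finset.range (m+1), C ((m.choose n : ℕ) : ZMod p) * (1 + C (-2:ZMod p) * X)^n
      = ((1 + C (-2:ZMod p) * X) + 1)^m := by
    rw [add_pow]
    refine Finset.sum_congr rfl fun n hn => ?_
    rw [one_pow, mul_one, ← Polynomial.C_eq_natCast]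
    ring
  rw [outer]
  have hfac : ((1 + C (-2:ZMod p) * X) + 1)^m = C (((-2:ZMod p))^m) * (X-1)^m := by
    rw [C_pow, ← mul_pow, hC2]
    ring
  rw [hfac]
  congr 1
  congr 1
  have hne : (-2 : ZMod p) ≠ 0 := by
    simpa using (zmod_two_ne_zero p hodd)
  have hm2 : m = p / 2 := by omega
  rw [hm2]
  split_ifs with hsq
  · exact (ZMod.euler_criterion p hne).mp hsq
  · rcases ZMod.pow_div_two_eq_neg_one_or_one p hne with h1 | h1
    · exact absurd ((ZMod.euler_criterion p hne).mpr h1) hsq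
    · exact h1
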